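/- Let 𝒦 be a Noetherian integral domain with fraction field K, 𝔄 ⊆ 𝔅 as above (𝔅 an order in 𝔄_K containing 𝔄), and let M, M' be 𝔅-modules, finite and torsion-free over 𝒦. Then M ≅ M' as 𝔅-modules if and only if M|_𝔄 ≅ M'|_𝔄 as 𝔄-modules. Moreover, if M|_𝔄 decomposes as a direct sum N₁ ⊕ N₂ of 𝔄-submodules, then M decomposes as M₁ ⊕ M₂ in 𝔅-modules with M_i|_𝔄 ≅ N_i. -/
import Mathlib

open scoped TensorProduct

/-- Clearing denominators in `K ⊗[𝒦] 𝔄`. -/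
lemma order_restriction_clear_denom
    {𝒦 : Type*} [CommRing 𝒦] [IsDomain 𝒦]
    {𝔄 : Type*} [Ring 𝔄] [Algebra 𝒦 𝔄] :
    ∀ x : FractionRing 𝒦 ⊗[𝒦] 𝔄, ∃ k : 𝒦, k ≠ 0 ∧ ∃ a : 𝔄,
      k • x = (1 : FractionRing 𝒦) ⊗ₜ[𝒦] a := by
  intro x
  induction x using TensorProduct.induction_on with
  | zero => exact ⟨1, one_ne_zero, 0, by simp⟩
  | tmul c a =>
    obtain ⟨⟨n, d⟩, hd⟩ := IsLocalization.surj (nonZeroDivisors 𝒦) c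
    refine ⟨d, nonZeroDivisors.coe_ne_zero d, n • a, ?_⟩
    have h1 : (d : 𝒦) • c = algebraMap 𝒦 (FractionRing 𝒦) n := by
      rw [Algebra.smul_def, mul_comm]; exact hd
    rw [TensorProduct.smul_tmul', h1, Algebra.algebraMap_eq_smul_one]
    exact TensorProduct.smul_tmul n 1 a
  | add x y hx hy =>
    obtain ⟨k₁, hk₁, a₁, ha₁⟩ := hx
    obtain ⟨k₂, hk₂, a₂, ha₂⟩ := hy
    refine ⟨k₁ * k₂, mul_ne_zero hk₁ hk₂, k₂ • a₁ + k₁ • a₂, ?_⟩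
    rw [smul_add, TensorProduct.tmul_add, mul_comm k₁ k₂, mul_smul, ha₁,
      mul_comm k₂ k₁, mul_smul, ha₂, TensorProduct.tmul_smul, TensorProduct.tmul_smul]

/-- **Isomorphism and splitting descend along an order.** With `𝒦` a Noetherian domain,
`K` its fraction field, `𝔄` a finite torsion-free `𝒦`-algebra and `𝔅` an order in
`𝔄_K = K ⊗[𝒦] 𝔄` containing `𝔄`: two `𝔅`-modules `M, M'` (finite and torsion-free over `𝒦`)
are isomorphic over `𝔅` iff their restrictions to `𝔄` are isomorphic; and any direct sum
decomposition `M|_𝔄 = N₁ ⊕ N₂` into `𝔄`-submodules lifts to a decomposition `M = M₁ ⊕ M₂`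
into `𝔅`-submodules with `M_i|_𝔄 ≅ N_i`. -/
theorem order_restriction_iso_and_splitting
    {𝒦 : Type*} [CommRing 𝒦] [IsDomain 𝒦] [IsNoetherianRing 𝒦]
    {𝔄 : Type*} [Ring 𝔄] [Algebra 𝒦 𝔄] [Module.Finite 𝒦 𝔄] [NoZeroSMulDivisors 𝒦 𝔄]
    {𝔅 : Type*} [Ring 𝔅] [Algebra 𝒦 𝔅] [Module.Finite 𝒦 𝔅]
    (i : 𝔄 →ₐ[𝒦] 𝔅) (j : 𝔅 →ₐ[𝒦] (FractionRing 𝒦 ⊗[𝒦] 𝔄))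
    (hj : Function.Injective j)
    (hij : j.comp i = Algebra.TensorProduct.includeRight)
    (hfull : Submodule.span (FractionRing 𝒦) (Set.range j) = ⊤)
    (M M' : Type*)
    [AddCommGroup M] [Module 𝔅 M] [Module 𝒦 M] [IsScalarTower 𝒦 𝔅 M]
    [Module.Finite 𝒦 M] [NoZeroSMulDivisors 𝒦 M]
    [AddCommGroup M'] [Module 𝔅 M'] [Module 𝒦 M'] [IsScalarTower 𝒦 𝔅 M']
    [Module.Finite 𝒦 M'] [NoZeroSMulDivisors 𝒦 M'] :
    letI : Module 𝔄 M := Module.compHom M i.toRingHom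
    letI : Module 𝔄 M' := Module.compHom M' i.toRingHom
    (Nonempty (M ≃ₗ[𝔅] M') ↔ Nonempty (M ≃ₗ[𝔄] M')) ∧
      (∀ N₁ N₂ : Submodule 𝔄 M, IsCompl N₁ N₂ →
        ∃ M₁ M₂ : Submodule 𝔅 M, IsCompl M₁ M₂ ∧
          (letI : Module 𝔄 M₁ := Module.compHom M₁ i.toRingHom;
            Nonempty (M₁ ≃ₗ[𝔄] N₁)) ∧
          (letI : Module 𝔄 M₂ := Module.compHom M₂ i.toRingHom;
            Nonempty (M₂ ≃ₗ[𝔄] N₂))) := by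
  letI instM : Module 𝔄 M := Module.compHom M i.toRingHom
  letI instM' : Module 𝔄 M' := Module.compHom M' i.toRingHom
  -- every element of 𝔅 becomes an element of 𝔄 after clearing a denominator
  have hclear : ∀ b : 𝔅, ∃ k : 𝒦, k ≠ 0 ∧ ∃ a : 𝔄, k • b = i a := by
    intro b
    obtain ⟨k, hk, a, ha⟩ := order_restriction_clear_denom (j b)
    refine ⟨k, hk, a, hj ?_⟩
    rw [map_smul, ha]
    exact (AlgHom.congr_fun hij a).symm
  -- basic smul facts
  have hsmulM : ∀ (a : 𝔄) (m : M), a • m = i a • m := fun _ _ => rfl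
  have hsmulM' : ∀ (a : 𝔄) (m : M'), a • m = i a • m := fun _ _ => rfl
  have hKM : ∀ (k : 𝒦) (m : M), algebraMap 𝒦 𝔄 k • m = k • m := by
    intro k m
    rw [hsmulM, i.commutes, algebraMap_smul]
  have hKM' : ∀ (k : 𝒦) (m : M'), algebraMap 𝒦 𝔄 k • m = k • m := by
    intro k m
    rw [hsmulM', i.commutes, algebraMap_smul]
  refine ⟨⟨fun ⟨e⟩ => ⟨?_⟩, fun ⟨e⟩ => ⟨?_⟩⟩, ?_⟩
  · -- 𝔅-iso restricts to 𝔄-iso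
    exact
      { toFun := e, invFun := e.symm, left_inv := e.left_inv, right_inv := e.right_inv,
        map_add' := e.map_add,
        map_smul' := fun a m => by
          simp only [RingHom.id_apply, hsmulM, hsmulM', map_smul] }
  · -- 𝔄-iso is automatically 𝔅-linear
    refine
      { toFun := e, invFun := e.symm, left_inv := e.left_inv, right_inv := e.right_inv,
        map_add' := e.map_add, map_smul' := fun b m => ?_ }
    show e (b • m) = b • e m
    obtain ⟨k, hk, a, ha⟩ := hclear b
    apply smul_right_injective M' hk
    show k • e (b • m) = k • (b • e m)
    have h1 : k • e (b • m) = e ((k • b) • m) := by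
      rw [smul_assoc, ← hKM (m := b • m), map_smul e, hKM']
    rw [h1, ha, ← hsmulM, map_smul e, hsmulM', ← ha, smul_assoc]
  · -- splitting
    intro N₁ N₂ hN
    -- each complemented 𝔄-submodule is 𝔅-stable
    have hstab : ∀ (N N' : Submodule 𝔄 M), IsCompl N N' →
        ∀ (b : 𝔅) (n : M), n ∈ N → b • n ∈ N := by
      intro N N' hC b n hn
      obtain ⟨k, hk, a, ha⟩ := hclear b
      have htop : b • n ∈ N ⊔ N' := by rw [hC.sup_eq_top]; trivial
      obtain ⟨y, hy, z, hz, hyz⟩ := Submodule.mem_sup.mp htop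
      have hzero : k • z = 0 := by
        have h1 : k • (b • n) = a • n := by
          rw [← smul_assoc, ha, hsmulM]
        have h2 : k • y + k • z = a • n := by
          rw [← smul_add, hyz, h1]
        have hky : k • y ∈ N := by
          rw [← hKM]; exact N.smul_mem _ hy
        have hkz : k • z ∈ N := by
          have : k • z = a • n - k • y := by rw [eq_sub_iff_add_eq, add_comm, h2]
          rw [this]; exact N.sub_mem (N.smul_mem _ hn) hky
        have hkz' : k • z ∈ N' := by rw [← hKM]; exact N'.smul_mem _ hz
        exact (Submodule.disjoint_def.mp hC.disjoint) _ hkz hkz'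
      have hz0 : z = 0 := by
        rcases smul_eq_zero.mp hzero with h | h
        · exact absurd h hk
        · exact h
      rw [← hyz, hz0, add_zero]; exact hy
    let B₁ : Submodule 𝔅 M :=
      { carrier := N₁
        add_mem' := fun h h' => N₁.add_mem h h'
        zero_mem' := N₁.zero_mem
        smul_mem' := fun b {n} hn => hstab N₁ N₂ hN b n hn }
    let B₂ : Submodule 𝔅 M :=
      { carrier := N₂
        add_mem' := fun h h' => N₂.add_mem h h'
        zero_mem' := N₂.zero_mem
        smul_mem' := fun b {n} hn => hstab N₂ N₁ hN.symm b n hn }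
    refine ⟨B₁, B₂, ⟨?_, ?_⟩, ⟨?_⟩, ⟨?_⟩⟩
    · rw [disjoint_iff_inf_le]
      intro x hx
      exact (Submodule.disjoint_def.mp hN.disjoint) x hx.1 hx.2
    · rw [codisjoint_iff_le_sup]
      intro x _
      have : x ∈ N₁ ⊔ N₂ := by rw [hN.sup_eq_top]; trivial
      obtain ⟨y, hy, z, hz, hyz⟩ := Submodule.mem_sup.mp this
      exact Submodule.mem_sup.mpr ⟨y, hy, z, hz, hyz⟩
    · exact
        { toFun := fun x => ⟨x.1, x.2⟩, invFun := fun x => ⟨x.1, x.2⟩,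
          left_inv := fun _ => rfl, right_inv := fun _ => rfl,
          map_add' := fun _ _ => rfl, map_smul' := fun _ _ => rfl }
    · exact
        { toFun := fun x => ⟨x.1, x.2⟩, invFun := fun x => ⟨x.1, x.2⟩,
          left_inv := fun _ => rfl, right_inv := fun _ => rfl,
          map_add' := fun _ _ => rfl, map_smul' := fun _ _ => rfl }
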